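/- Let ℓ be an odd prime, k ≥ 1, and D an integer that is a quadratic nonresidue modulo ℓ. Let R_k = (ℤ/ℓᵏℤ)[X]/(X² − D) with α the image of X. For each r with 1 ≤ r ≤ k, the number of pairs (a,d) ∈ R_k² satisfying both a·d ∈ im((ℤ/ℓᵏℤ)^×) + α·ℓʳ·im(ℤ/ℓᵏℤ) and a + d ∈ im(ℤ/ℓᵏℤ) equals ℓ^{3k−r−2}(ℓ−1)(rℓ − r + ℓ). -/

import Mathlib

open Matrix Polynomial

/-- The ring `R_k = (ℤ/ℓᵏℤ)[X]/(X² − D)`. -/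
abbrev InertRing (ℓ k : ℕ) (D : ℤ) : Type :=
  AdjoinRoot ((X : Polynomial (ZMod (ℓ ^ k))) ^ 2 - C (D : ZMod (ℓ ^ k)))

/-- `α`, the image of `X` in `R_k`. -/
noncomputable def alphaI (ℓ k : ℕ) (D : ℤ) : InertRing ℓ k D :=
  AdjoinRoot.root ((X : Polynomial (ZMod (ℓ ^ k))) ^ 2 - C (D : ZMod (ℓ ^ k)))

/-- The two conditions on the pair `(a,d)`:
`a·d ∈ im((ℤ/ℓᵏℤ)ˣ) + α·ℓʳ·im(ℤ/ℓᵏℤ)` and `a + d ∈ im(ℤ/ℓᵏℤ)`. -/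
def pairCond (ℓ k : ℕ) (D : ℤ) (r : ℕ) (a d : InertRing ℓ k D) : Prop :=
  (∃ (u : (ZMod (ℓ ^ k))ˣ) (z : ZMod (ℓ ^ k)),
    a * d = algebraMap (ZMod (ℓ ^ k)) (InertRing ℓ k D) (u : ZMod (ℓ ^ k)) +
      alphaI ℓ k D * (ℓ : InertRing ℓ k D) ^ r *
        algebraMap (ZMod (ℓ ^ k)) (InertRing ℓ k D) z) ∧
  ∃ z : ZMod (ℓ ^ k), a + d = algebraMap (ZMod (ℓ ^ k)) (InertRing ℓ k D) z

section CountingAux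
open Finset


variable {ℓ k : ℕ}

lemma count_dvd_val (hℓ : ℓ.Prime) [NeZero (ℓ ^ k)] {j : ℕ} (hj : j ≤ k) :
    (univ.filter fun x : ZMod (ℓ ^ k) => ℓ ^ j ∣ x.val).card = ℓ ^ (k - j) := by
  have hlt : ∀ i : Fin (ℓ ^ (k - j)), ℓ ^ j * i.val < ℓ ^ k := by
    intro i
    calc ℓ ^ j * i.val < ℓ ^ j * ℓ ^ (k - j) := by
          exact (Nat.mul_lt_mul_left (pow_pos hℓ.pos j)).2 i.isLt
      _ = ℓ ^ k := by rw [← pow_add]; congr 1; omega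
  have himg : (univ.filter fun x : ZMod (ℓ ^ k) => ℓ ^ j ∣ x.val)
      = Finset.image (fun i : Fin (ℓ ^ (k - j)) => ((ℓ ^ j * i.val : ℕ) : ZMod (ℓ ^ k))) univ := by
    ext x
    simp only [mem_filter, mem_univ, true_and, Finset.mem_image]
    constructor
    · rintro ⟨m, hm⟩
      have hmlt : m < ℓ ^ (k - j) := by
        have h1 : ℓ ^ j * m < ℓ ^ j * ℓ ^ (k - j) := by
          rw [← pow_add, ← hm]
          have := x.val_lt
          have : j + (k - j) = k := by omega
          rwa [this]
        exact Nat.lt_of_mul_lt_mul_left h1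
      exact ⟨⟨m, hmlt⟩, by rw [← hm, ZMod.natCast_zmod_val]⟩
    · rintro ⟨i, rfl⟩
      rw [ZMod.val_cast_of_lt (hlt i)]
      exact ⟨i.val, rfl⟩
  have hinj : Function.Injective (fun i : Fin (ℓ ^ (k - j)) => ((ℓ ^ j * i.val : ℕ) : ZMod (ℓ ^ k))) := by
    intro i i' h
    have := congrArg ZMod.val h
    rw [ZMod.val_cast_of_lt (hlt i), ZMod.val_cast_of_lt (hlt i')] at this
    have : i.val = i'.val := Nat.eq_of_mul_eq_mul_left (pow_pos hℓ.pos j) this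
    exact Fin.ext this
  rw [himg, Finset.card_image_of_injective _ hinj, card_univ, Fintype.card_fin]


lemma natdvd_val_mul_iff {n m : ℕ} [NeZero n] (hm : m ∣ n) (x y : ZMod n) :
    m ∣ (x * y).val ↔ m ∣ x.val * y.val := by
  rw [ZMod.val_mul]
  exact Nat.dvd_mod_iff hm

lemma dvd_val_iff {n m : ℕ} [NeZero n] (hm : m ∣ n) (x : ZMod n) :
    (∃ z, x = (m : ZMod n) * z) ↔ m ∣ x.val := by
  constructor
  · rintro ⟨z, rfl⟩
    rw [ZMod.val_mul]
    refine (Nat.dvd_mod_iff hm).2 (Dvd.dvd.mul_right ?_ _)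
    rw [ZMod.val_natCast]
    exact (Nat.dvd_mod_iff hm).2 dvd_rfl
  · rintro ⟨c, hc⟩
    refine ⟨(c : ZMod n), ?_⟩
    rw [← ZMod.natCast_zmod_val x, hc]
    push_cast
    ring

lemma isUnit_iff_not_dvd (hℓ : ℓ.Prime) (hk : 1 ≤ k) [NeZero (ℓ ^ k)] (x : ZMod (ℓ ^ k)) :
    IsUnit x ↔ ¬ ℓ ∣ x.val := by
  conv_lhs => rw [← ZMod.natCast_zmod_val x]
  rw [ZMod.isUnit_iff_coprime, Nat.coprime_pow_right_iff hk, Nat.coprime_comm,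
    Nat.Prime.coprime_iff_not_dvd hℓ]

lemma pow_dvd_cancel (hℓ : ℓ.Prime) {a b j r : ℕ} (h1 : ℓ ^ j ∣ a) (h2 : ¬ ℓ ^ (j + 1) ∣ a)
    (h : ℓ ^ r ∣ a * b) (hjr : j ≤ r) : ℓ ^ (r - j) ∣ b := by
  obtain ⟨c, rfl⟩ := h1
  have hc : ¬ ℓ ∣ c := fun hd => h2 (by
    obtain ⟨e, rfl⟩ := hd
    exact ⟨e, by ring⟩)
  have h' : ℓ ^ j * ℓ ^ (r - j) ∣ ℓ ^ j * (c * b) := by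
    rw [← pow_add, mul_assoc] at *
    convert h using 2
    omega
  have h'' := (Nat.mul_dvd_mul_iff_left (pow_pos hℓ.pos j)).1 h'
  exact (Nat.Coprime.dvd_mul_left (((Nat.Prime.coprime_iff_not_dvd hℓ).2 hc).pow_left _)).1 h''

lemma shear_count {n : ℕ} [NeZero n] (Q W : ZMod n → Prop) [DecidablePred Q] [DecidablePred W] :
    (univ.filter fun p : ZMod n × ZMod n => Q p.1 ∧ W (p.2 - p.1)).card
      = (univ.filter Q).card * (univ.filter W).card := by
  rw [← Finset.card_product, ← Finset.filter_product, Finset.univ_product_univ]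
  refine Finset.card_bij' (fun p _ => (p.1, p.2 - p.1)) (fun p _ => (p.1, p.2 + p.1)) ?_ ?_ ?_ ?_
  · intro p hp
    simp only [mem_filter, mem_univ, true_and] at hp ⊢
    exact hp
  · intro p hp
    simp only [mem_filter, mem_univ, true_and] at hp ⊢
    simpa using hp
  · intro p _
    simp
  · intro p _
    simp

/-- reduce mod ℓ -/
noncomputable def piL (ℓ k : ℕ) (hℓ : ℓ.Prime) (hk : 1 ≤ k) : ZMod (ℓ ^ k) →+* ZMod ℓ :=
  ZMod.castHom (dvd_pow_self ℓ (by omega)) (ZMod ℓ)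

lemma piL_eq_val (hℓ : ℓ.Prime) (hk : 1 ≤ k) [NeZero (ℓ ^ k)] (x : ZMod (ℓ ^ k)) :
    piL ℓ k hℓ hk x = (x.val : ZMod ℓ) := by
  rw [piL, ZMod.castHom_apply, ZMod.natCast_val]

lemma piL_zero_iff (hℓ : ℓ.Prime) (hk : 1 ≤ k) [NeZero (ℓ ^ k)] (x : ZMod (ℓ ^ k)) :
    piL ℓ k hℓ hk x = 0 ↔ ℓ ∣ x.val := by
  rw [piL_eq_val hℓ hk, ZMod.natCast_eq_zero_iff]

lemma isUnit_iff_piL (hℓ : ℓ.Prime) (hk : 1 ≤ k) [NeZero (ℓ ^ k)] (x : ZMod (ℓ ^ k)) :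
    IsUnit x ↔ piL ℓ k hℓ hk x ≠ 0 := by
  rw [isUnit_iff_not_dvd hℓ hk, ne_eq, piL_zero_iff hℓ hk x]

def Acond (ℓ k r j : ℕ) (a : ZMod (ℓ ^ k)) : Prop :=
  if j = r then ℓ ^ r ∣ a.val else ℓ ^ j ∣ a.val ∧ ¬ ℓ ^ (j + 1) ∣ a.val

def Bcond (ℓ k r j : ℕ) (p : ZMod (ℓ ^ k) × ZMod (ℓ ^ k)) : Prop :=
  (if j = 0 then True else IsUnit p.1) ∧
    (if j = r then IsUnit p.2 else ℓ ^ (r - j) ∣ (p.2 - p.1).val)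

lemma prod_count {α β : Type*} [Fintype α] [Fintype β] (P : α → Prop) (Q : β → Prop)
    [DecidablePred P] [DecidablePred Q] :
    (univ.filter fun t : α × β => P t.1 ∧ Q t.2).card
      = (univ.filter P).card * (univ.filter Q).card := by
  rw [← Finset.card_product, ← Finset.filter_product, Finset.univ_product_univ]

lemma count_not_dvd (hℓ : ℓ.Prime) (hk : 1 ≤ k) [NeZero (ℓ ^ k)] :
    (univ.filter fun x : ZMod (ℓ ^ k) => ¬ ℓ ∣ x.val).card = ℓ ^ (k - 1) * (ℓ - 1) := by
  have h1 : (univ.filter fun x : ZMod (ℓ ^ k) => ℓ ∣ x.val).card = ℓ ^ (k - 1) := by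
    have := count_dvd_val (k := k) hℓ (j := 1) hk
    simpa using this
  rw [Finset.filter_not, Finset.card_sdiff_of_subset (Finset.filter_subset _ _), h1, card_univ, ZMod.card]
  have h2 : ℓ ^ k = ℓ ^ (k - 1) * ℓ := by
    rw [← pow_succ]
    congr 1
    omega
  rw [h2, Nat.mul_sub, mul_one]

lemma count_unit (hℓ : ℓ.Prime) (hk : 1 ≤ k) [NeZero (ℓ ^ k)] :
    (univ.filter fun x : ZMod (ℓ ^ k) => IsUnit x).card = ℓ ^ (k - 1) * (ℓ - 1) := by
  rw [Finset.filter_congr fun x _ => isUnit_iff_not_dvd hℓ hk x]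
  · exact count_not_dvd hℓ hk

lemma count_exact (hℓ : ℓ.Prime) (hk : 1 ≤ k) [NeZero (ℓ ^ k)] {j : ℕ} (hj : j + 1 ≤ k) :
    (univ.filter fun x : ZMod (ℓ ^ k) => ℓ ^ j ∣ x.val ∧ ¬ ℓ ^ (j + 1) ∣ x.val).card
      = ℓ ^ (k - j - 1) * (ℓ - 1) := by
  have hset : (univ.filter fun x : ZMod (ℓ ^ k) => ℓ ^ j ∣ x.val ∧ ¬ ℓ ^ (j + 1) ∣ x.val)
      = (univ.filter fun x : ZMod (ℓ ^ k) => ℓ ^ j ∣ x.val)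
        \ (univ.filter fun x : ZMod (ℓ ^ k) => ℓ ^ (j + 1) ∣ x.val) := by
    ext x
    simp only [mem_filter, mem_univ, true_and, Finset.mem_sdiff]
  have hsub : (univ.filter fun x : ZMod (ℓ ^ k) => ℓ ^ (j + 1) ∣ x.val)
      ⊆ (univ.filter fun x : ZMod (ℓ ^ k) => ℓ ^ j ∣ x.val) := by
    intro x hx
    simp only [mem_filter, mem_univ, true_and] at hx ⊢
    exact dvd_trans (pow_dvd_pow _ (Nat.le_succ j)) hx
  rw [hset, Finset.card_sdiff_of_subset hsub, count_dvd_val hℓ (by omega), count_dvd_val hℓ hj]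
  have h2 : ℓ ^ (k - j) = ℓ ^ (k - j - 1) * ℓ := by
    rw [← pow_succ]
    congr 1
    omega
  have h3 : k - (j + 1) = k - j - 1 := by omega
  rw [h2, h3, Nat.mul_sub, mul_one]

lemma count_main (ℓ k : ℕ) (hℓ : ℓ.Prime) (hk : 1 ≤ k) (D : ℤ)
    (hD : ¬ IsSquare ((D : ZMod ℓ))) (r : ℕ) (hr1 : 1 ≤ r) (hrk : r ≤ k) :
    Nat.card {t : ZMod (ℓ ^ k) × ZMod (ℓ ^ k) × ZMod (ℓ ^ k) //
        IsUnit (t.2.1 * t.2.2 - (D : ZMod (ℓ ^ k)) * t.1 ^ 2) ∧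
          ℓ ^ r ∣ (t.1 * (t.2.2 - t.2.1)).val}
      = ℓ ^ (3 * k - r - 2) * (ℓ - 1) * (r * ℓ - r + ℓ) := by
  classical
  haveI : NeZero (ℓ ^ k) := ⟨pow_ne_zero _ hℓ.ne_zero⟩
  haveI : Fact (ℓ.Prime) := ⟨hℓ⟩
  rw [Nat.card_eq_fintype_card, Fintype.card_subtype]
  set π := piL ℓ k hℓ hk with hπ
  have hDπ : π ((D : ZMod (ℓ ^ k))) = (D : ZMod ℓ) := map_intCast π D
  have hunit : ∀ x : ZMod (ℓ ^ k), IsUnit x ↔ π x ≠ 0 := isUnit_iff_piL hℓ hk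
  have hzero : ∀ x : ZMod (ℓ ^ k), π x = 0 ↔ ℓ ∣ x.val := piL_zero_iff hℓ hk
  -- criterion when ℓ ∣ a1
  have hcrit1 : ∀ a1 a0 d0 : ZMod (ℓ ^ k), ℓ ∣ a1.val →
      (IsUnit (a0 * d0 - (D : ZMod (ℓ ^ k)) * a1 ^ 2) ↔ (IsUnit a0 ∧ IsUnit d0)) := by
    intro a1 a0 d0 h1
    rw [hunit, hunit, hunit]
    have ha : π a1 = 0 := (hzero a1).2 h1
    rw [_root_.map_sub, _root_.map_mul, _root_.map_mul, map_pow, ha]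
    simp [mul_ne_zero_iff]
  -- criterion when ℓ ∤ a1 and ℓ ∣ (d0 - a0)
  have hcrit2 : ∀ a1 a0 d0 : ZMod (ℓ ^ k), ¬ ℓ ∣ a1.val → ℓ ∣ (d0 - a0).val →
      IsUnit (a0 * d0 - (D : ZMod (ℓ ^ k)) * a1 ^ 2) := by
    intro a1 a0 d0 hna hwl
    have hv : π a1 ≠ 0 := fun h => hna ((hzero a1).1 h)
    have hda : π d0 = π a0 := by
      have h0 : π (d0 - a0) = 0 := (hzero _).2 hwl
      rwa [_root_.map_sub, sub_eq_zero] at h0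
    rw [hunit, _root_.map_sub, _root_.map_mul, _root_.map_mul, map_pow, hDπ, hda]
    intro h
    apply hD
    refine ⟨π a0 * (π a1)⁻¹, ?_⟩
    have h' : π a0 * π a0 = (D : ZMod ℓ) * (π a1 * π a1) := by
      have h2 := sub_eq_zero.1 h
      rw [h2]
      ring
    have hinv : π a1 * (π a1)⁻¹ = 1 := mul_inv_cancel₀ hv
    calc (D : ZMod ℓ) = (D : ZMod ℓ) * ((π a1 * (π a1)⁻¹) * (π a1 * (π a1)⁻¹)) := by
          rw [hinv]; ring
      _ = (π a0 * π a0) * ((π a1)⁻¹ * (π a1)⁻¹) := by rw [h']; ring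
      _ = π a0 * (π a1)⁻¹ * (π a0 * (π a1)⁻¹) := by ring
  -- partition
  have hAdvd : ∀ j (x : ZMod (ℓ ^ k)), j ≤ r → Acond ℓ k r j x → ℓ ^ j ∣ x.val := by
    intro j x hjr hA
    unfold Acond at hA
    by_cases h : j = r
    · rw [if_pos h] at hA; subst h; exact hA
    · rw [if_neg h] at hA; exact hA.1
  have hkey : ∀ i j (x : ZMod (ℓ ^ k)), i < j → j ≤ r → Acond ℓ k r i x → Acond ℓ k r j x → False := by
    intro i j x hij hjr hAi hAj
    unfold Acond at hAi
    rw [if_neg (by omega : ¬ i = r)] at hAi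
    exact hAi.2 (dvd_trans (pow_dvd_pow ℓ (by omega)) (hAdvd j x hjr hAj))
  have hpart : (univ.filter fun t : ZMod (ℓ ^ k) × ZMod (ℓ ^ k) × ZMod (ℓ ^ k) =>
        IsUnit (t.2.1 * t.2.2 - (D : ZMod (ℓ ^ k)) * t.1 ^ 2) ∧ ℓ ^ r ∣ (t.1 * (t.2.2 - t.2.1)).val)
      = (Finset.range (r + 1)).biUnion
          (fun j => univ.filter fun t : ZMod (ℓ ^ k) × ZMod (ℓ ^ k) × ZMod (ℓ ^ k) =>
            Acond ℓ k r j t.1 ∧ Bcond ℓ k r j t.2) := by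
    ext ⟨a1, a0, d0⟩
    simp only [mem_filter, mem_univ, true_and, Finset.mem_biUnion, Finset.mem_range]
    constructor
    · rintro ⟨hP1, hP2⟩
      have hP2' : ℓ ^ r ∣ a1.val * (d0 - a0).val :=
        (natdvd_val_mul_iff (pow_dvd_pow ℓ hrk) _ _).1 hP2
      by_cases hjr : ℓ ^ r ∣ a1.val
      · refine ⟨r, by omega, ?_, ?_⟩
        · unfold Acond; rw [if_pos rfl]; exact hjr
        · have hla : ℓ ∣ a1.val := dvd_trans (dvd_pow_self ℓ (by omega)) hjr
          have h2 := (hcrit1 a1 a0 d0 hla).1 hP1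
          unfold Bcond
          rw [if_neg (by omega : ¬ r = 0), if_pos rfl]
          exact ⟨h2.1, h2.2⟩
      · have hne : a1.val ≠ 0 := fun h => hjr (h ▸ dvd_zero _)
        set j := padicValNat ℓ a1.val with hj
        have hd1 : ℓ ^ j ∣ a1.val := pow_padicValNat_dvd
        have hd2 : ¬ ℓ ^ (j + 1) ∣ a1.val := pow_succ_padicValNat_not_dvd hne
        have hjlt : j < r := by
          by_contra h
          exact hjr (dvd_trans (pow_dvd_pow ℓ (by omega)) hd1)
        have hw : ℓ ^ (r - j) ∣ (d0 - a0).val := pow_dvd_cancel hℓ hd1 hd2 hP2' (le_of_lt hjlt)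
        refine ⟨j, by omega, ?_, ?_⟩
        · unfold Acond; rw [if_neg (by omega : ¬ j = r)]; exact ⟨hd1, hd2⟩
        · unfold Bcond
          rw [if_neg (by omega : ¬ j = r)]
          refine ⟨?_, hw⟩
          by_cases hj0 : j = 0
          · rw [if_pos hj0]; trivial
          · rw [if_neg hj0]
            have hla : ℓ ∣ a1.val := dvd_trans (dvd_pow_self ℓ hj0) hd1
            exact ((hcrit1 a1 a0 d0 hla).1 hP1).1
    · rintro ⟨j, hjlt, hA, hB⟩
      unfold Acond at hA
      unfold Bcond at hB
      by_cases hjr : j = r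
      · subst hjr
        rw [if_pos rfl] at hA
        rw [if_neg (by omega : ¬ j = 0), if_pos rfl] at hB
        refine ⟨(hcrit1 a1 a0 d0 (dvd_trans (dvd_pow_self ℓ (by omega)) hA)).2 hB, ?_⟩
        rw [natdvd_val_mul_iff (pow_dvd_pow ℓ hrk)]
        exact Dvd.dvd.mul_right hA _
      · rw [if_neg hjr] at hA
        rw [if_neg hjr] at hB
        obtain ⟨hB1, hB2⟩ := hB
        have hwl : ℓ ∣ (d0 - a0).val := dvd_trans (dvd_pow_self ℓ (by omega)) hB2
        constructor
        · by_cases hj0 : j = 0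
          · subst hj0
            have hna : ¬ ℓ ∣ a1.val := by simpa using hA.2
            exact hcrit2 a1 a0 d0 hna hwl
          · rw [if_neg hj0] at hB1
            refine (hcrit1 a1 a0 d0 (dvd_trans (dvd_pow_self ℓ hj0) hA.1)).2 ⟨hB1, ?_⟩
            rw [hunit] at hB1 ⊢
            have h0 : π (d0 - a0) = 0 := (hzero _).2 hwl
            rw [_root_.map_sub, sub_eq_zero] at h0
            rw [h0]
            exact hB1
        · rw [natdvd_val_mul_iff (pow_dvd_pow ℓ hrk)]
          have h3 : ℓ ^ j * ℓ ^ (r - j) ∣ a1.val * (d0 - a0).val := mul_dvd_mul hA.1 hB2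
          rwa [← pow_add, (by omega : j + (r - j) = r)] at h3
  have hdisj : ∀ i ∈ Finset.range (r + 1), ∀ j ∈ Finset.range (r + 1), i ≠ j →
      Disjoint
        (univ.filter fun t : ZMod (ℓ ^ k) × ZMod (ℓ ^ k) × ZMod (ℓ ^ k) =>
          Acond ℓ k r i t.1 ∧ Bcond ℓ k r i t.2)
        (univ.filter fun t : ZMod (ℓ ^ k) × ZMod (ℓ ^ k) × ZMod (ℓ ^ k) =>
          Acond ℓ k r j t.1 ∧ Bcond ℓ k r j t.2) := by
    intro i hi j hj hij
    rw [Finset.disjoint_left]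
    intro t hti htj
    simp only [mem_filter, mem_univ, true_and] at hti htj
    rcases lt_or_gt_of_ne hij with h | h
    · exact hkey i j t.1 h (by simp at hj; omega) hti.1 htj.1
    · exact hkey j i t.1 h (by simp at hi; omega) htj.1 hti.1
  rw [hpart, Finset.card_biUnion hdisj]
  -- per-class counts
  have harith2 : ∀ a b c u v : ℕ, (ℓ ^ a * u) * ((ℓ ^ b * v) * ℓ ^ c) = ℓ ^ (a + b + c) * (u * v) := by
    intros; rw [pow_add, pow_add]; ring
  have harith1 : ∀ a b c u : ℕ, (ℓ ^ a * u) * (ℓ ^ b * ℓ ^ c) = ℓ ^ (a + b + c) * u := by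
    intros; rw [pow_add, pow_add]; ring
  have harith3 : ∀ a b c u v : ℕ, ℓ ^ a * ((ℓ ^ b * u) * (ℓ ^ c * v)) = ℓ ^ (a + b + c) * (u * v) := by
    intros; rw [pow_add, pow_add]; ring
  have hAc : ∀ j, j < r → (univ.filter fun x : ZMod (ℓ ^ k) => Acond ℓ k r j x).card
      = ℓ ^ (k - j - 1) * (ℓ - 1) := by
    intro j hj
    rw [Finset.filter_congr (fun x _ => show Acond ℓ k r j x ↔
      (ℓ ^ j ∣ x.val ∧ ¬ ℓ ^ (j + 1) ∣ x.val) by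
        unfold Acond; rw [if_neg (by omega : ¬ j = r)])]
    exact count_exact hℓ hk (by omega)
  have hAr : (univ.filter fun x : ZMod (ℓ ^ k) => Acond ℓ k r r x).card = ℓ ^ (k - r) := by
    rw [Finset.filter_congr (fun x _ => show Acond ℓ k r r x ↔ (ℓ ^ r ∣ x.val) by
        unfold Acond; rw [if_pos rfl])]
    exact count_dvd_val hℓ hrk
  have hB0 : (univ.filter fun p : ZMod (ℓ ^ k) × ZMod (ℓ ^ k) => Bcond ℓ k r 0 p).card
      = ℓ ^ k * ℓ ^ (k - r) := by
    rw [Finset.filter_congr (fun p _ => show Bcond ℓ k r 0 p ↔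
      ((fun _ : ZMod (ℓ ^ k) => True) p.1 ∧ (fun x : ZMod (ℓ ^ k) => ℓ ^ r ∣ x.val) (p.2 - p.1)) by
        unfold Bcond; rw [if_pos rfl, if_neg (by omega : ¬ (0:ℕ) = r)]; simp)]
    rw [shear_count (fun _ : ZMod (ℓ ^ k) => True) (fun x : ZMod (ℓ ^ k) => ℓ ^ r ∣ x.val),
      Finset.filter_true, card_univ, ZMod.card, count_dvd_val hℓ hrk]
  have hBr : (univ.filter fun p : ZMod (ℓ ^ k) × ZMod (ℓ ^ k) => Bcond ℓ k r r p).card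
      = (ℓ ^ (k - 1) * (ℓ - 1)) * (ℓ ^ (k - 1) * (ℓ - 1)) := by
    rw [Finset.filter_congr (fun p _ => show Bcond ℓ k r r p ↔ (IsUnit p.1 ∧ IsUnit p.2) by
        unfold Bcond; rw [if_neg (by omega : ¬ r = 0), if_pos rfl])]
    rw [prod_count (fun x : ZMod (ℓ ^ k) => IsUnit x) (fun x : ZMod (ℓ ^ k) => IsUnit x),
      count_unit hℓ hk]
  have hBm : ∀ j, 1 ≤ j → j < r → (univ.filter fun p : ZMod (ℓ ^ k) × ZMod (ℓ ^ k) =>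
      Bcond ℓ k r j p).card = (ℓ ^ (k - 1) * (ℓ - 1)) * ℓ ^ (k - (r - j)) := by
    intro j h1 h2
    rw [Finset.filter_congr (fun p _ => show Bcond ℓ k r j p ↔
      (IsUnit p.1 ∧ (fun x : ZMod (ℓ ^ k) => ℓ ^ (r - j) ∣ x.val) (p.2 - p.1)) by
        unfold Bcond; rw [if_neg (by omega : ¬ j = 0), if_neg (by omega : ¬ j = r)])]
    rw [shear_count (fun x : ZMod (ℓ ^ k) => IsUnit x) (fun x : ZMod (ℓ ^ k) => ℓ ^ (r - j) ∣ x.val),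
      count_unit hℓ hk, count_dvd_val hℓ (by omega)]
  have hG0 : (univ.filter fun t : ZMod (ℓ ^ k) × ZMod (ℓ ^ k) × ZMod (ℓ ^ k) =>
      Acond ℓ k r 0 t.1 ∧ Bcond ℓ k r 0 t.2).card = ℓ ^ (3 * k - r - 2) * (ℓ * (ℓ - 1)) := by
    rw [prod_count (Acond ℓ k r 0) (Bcond ℓ k r 0), hAc 0 (by omega), hB0, harith1]
    rw [(by omega : k - 0 - 1 + k + (k - r) = (3 * k - r - 2) + 1), pow_succ]
    ring
  have hGr : (univ.filter fun t : ZMod (ℓ ^ k) × ZMod (ℓ ^ k) × ZMod (ℓ ^ k) =>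
      Acond ℓ k r r t.1 ∧ Bcond ℓ k r r t.2).card
      = ℓ ^ (3 * k - r - 2) * ((ℓ - 1) * (ℓ - 1)) := by
    rw [prod_count (Acond ℓ k r r) (Bcond ℓ k r r), hAr, hBr, harith3]
    rw [(by omega : k - r + (k - 1) + (k - 1) = 3 * k - r - 2)]
  have hGm : ∀ j, 1 ≤ j → j < r → (univ.filter fun t : ZMod (ℓ ^ k) × ZMod (ℓ ^ k) × ZMod (ℓ ^ k) =>
      Acond ℓ k r j t.1 ∧ Bcond ℓ k r j t.2).card
      = ℓ ^ (3 * k - r - 2) * ((ℓ - 1) * (ℓ - 1)) := by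
    intro j h1 h2
    rw [prod_count (Acond ℓ k r j) (Bcond ℓ k r j), hAc j h2, hBm j h1 h2, harith2]
    rw [(by omega : k - j - 1 + (k - 1) + (k - (r - j)) = 3 * k - r - 2)]
  -- sum up
  rw [Finset.sum_range_succ]
  obtain ⟨s, rfl⟩ : ∃ s, r = s + 1 := ⟨r - 1, by omega⟩
  rw [Finset.sum_range_succ']
  rw [Finset.sum_congr rfl (fun i hi => hGm (i + 1) (by omega)
      (by have := Finset.mem_range.1 hi; omega))]
  rw [Finset.sum_const, Finset.card_range, smul_eq_mul, hG0, hGr]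
  have hl2 : 2 ≤ ℓ := hℓ.two_le
  obtain ⟨m, rfl⟩ : ∃ m, ℓ = m + 1 := ⟨ℓ - 1, by omega⟩
  simp only [Nat.add_sub_cancel]
  rw [(by rw [Nat.mul_add, mul_one]; omega :
    (s + 1) * (m + 1) - (s + 1) + (m + 1) = (s + 1) * m + (m + 1))]
  ring
end CountingAux

section StructAux

noncomputable def Phi (ℓ k : ℕ) (D : ℤ) (p : ZMod (ℓ ^ k) × ZMod (ℓ ^ k)) : InertRing ℓ k D :=
  AdjoinRoot.mk _ (C p.2 * X + C p.1)

section StructureLemmas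

variable (ℓ k : ℕ) (D : ℤ)

lemma gpoly_monic : ((X : Polynomial (ZMod (ℓ ^ k))) ^ 2 - C (D : ZMod (ℓ ^ k))).Monic :=
  monic_X_pow_sub_C _ two_ne_zero

lemma Phi_injective (hℓ : ℓ.Prime) (hk : 1 ≤ k) : Function.Injective (Phi ℓ k D) := by
  haveI : Fact (1 < ℓ ^ k) := ⟨Nat.one_lt_pow (by omega) hℓ.two_le⟩
  intro p q h
  have hdeg : ((X : Polynomial (ZMod (ℓ ^ k))) ^ 2 - C (D : ZMod (ℓ ^ k))).degree = (2 : ℕ) :=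
    degree_X_pow_sub_C (by norm_num) _
  have h2 := congrArg (AdjoinRoot.modByMonicHom (gpoly_monic ℓ k D)) h
  unfold Phi at h2
  rw [AdjoinRoot.modByMonicHom_mk, AdjoinRoot.modByMonicHom_mk,
    (modByMonic_eq_self_iff (gpoly_monic ℓ k D)).2 (by rw [hdeg]; exact degree_linear_le.trans_lt (by norm_num)),
    (modByMonic_eq_self_iff (gpoly_monic ℓ k D)).2 (by rw [hdeg]; exact degree_linear_le.trans_lt (by norm_num))] at h2
  have h0 : p.1 = q.1 := by simpa using congrArg (fun f => Polynomial.coeff f 0) h2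
  have h1 : p.2 = q.2 := by simpa using congrArg (fun f => Polynomial.coeff f 1) h2
  exact Prod.ext h0 h1

lemma Phi_surjective (hℓ : ℓ.Prime) (hk : 1 ≤ k) : Function.Surjective (Phi ℓ k D) := by
  haveI : Fact (1 < ℓ ^ k) := ⟨Nat.one_lt_pow (by omega) hℓ.two_le⟩
  intro x
  obtain ⟨f, rfl⟩ := AdjoinRoot.mk_surjective x
  set g : Polynomial (ZMod (ℓ ^ k)) := X ^ 2 - C (D : ZMod (ℓ ^ k)) with hg
  have hdeg : g.degree = (2 : ℕ) := degree_X_pow_sub_C (by norm_num) _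
  have hlt : (f %ₘ g).degree < (2 : ℕ) := by
    have := degree_modByMonic_lt f (gpoly_monic ℓ k D)
    rwa [hdeg] at this
  have hle : (f %ₘ g).natDegree ≤ 1 := by
    by_cases h0 : f %ₘ g = 0
    · simp [h0]
    · have := (Polynomial.natDegree_lt_iff_degree_lt h0).2 hlt
      omega
  refine ⟨((f %ₘ g).coeff 0, (f %ₘ g).coeff 1), ?_⟩
  unfold Phi
  rw [← eq_X_add_C_of_natDegree_le_one hle]
  exact AdjoinRoot.mk_eq_mk.2 ⟨-(f /ₘ g), by rw [hg, modByMonic_eq_sub_mul_div]; ring⟩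

lemma Phi_mul (p q : ZMod (ℓ ^ k) × ZMod (ℓ ^ k)) :
    Phi ℓ k D p * Phi ℓ k D q
      = Phi ℓ k D (p.1 * q.1 + (D : ZMod (ℓ ^ k)) * p.2 * q.2, p.1 * q.2 + p.2 * q.1) := by
  unfold Phi
  rw [← _root_.map_mul]
  dsimp only
  refine AdjoinRoot.mk_eq_mk.2 ⟨C (p.2 * q.2), ?_⟩
  simp only [C_mul, C_add]
  ring

lemma Phi_add (p q : ZMod (ℓ ^ k) × ZMod (ℓ ^ k)) :
    Phi ℓ k D p + Phi ℓ k D q = Phi ℓ k D (p.1 + q.1, p.2 + q.2) := by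
  unfold Phi
  rw [← _root_.map_add]
  dsimp only
  congr 1
  simp only [C_add]
  ring

lemma Phi_algebraMap (z : ZMod (ℓ ^ k)) :
    algebraMap (ZMod (ℓ ^ k)) (InertRing ℓ k D) z = Phi ℓ k D (z, 0) := by
  rw [AdjoinRoot.algebraMap_eq]
  show AdjoinRoot.mk _ (C z) = _
  unfold Phi
  congr 1
  simp

lemma Phi_alpha : alphaI ℓ k D = Phi ℓ k D (0, 1) := by
  rw [alphaI, ← AdjoinRoot.mk_X]
  unfold Phi
  congr 1
  simp

lemma Phi_natCast_pow (r : ℕ) :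
    (ℓ : InertRing ℓ k D) ^ r = Phi ℓ k D (((ℓ ^ r : ℕ) : ZMod (ℓ ^ k)), 0) := by
  rw [show ((ℓ : InertRing ℓ k D)) = algebraMap (ZMod (ℓ ^ k)) (InertRing ℓ k D) ((ℓ : ZMod (ℓ ^ k)))
      from (map_natCast _ ℓ).symm,
    ← map_pow, Phi_algebraMap]
  norm_cast

end StructureLemmas


/-- For `1 ≤ r ≤ k`, the number of pairs `(a,d) ∈ R_k²` satisfying both
conditions equals `ℓ^(3k−r−2)(ℓ−1)(rℓ − r + ℓ)`. -/
theorem stmt_14 (ℓ k : ℕ) (hℓ : ℓ.Prime) (hodd : ℓ ≠ 2) (hk : 1 ≤ k) (D : ℤ)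
    (hD : ¬ IsSquare (D : ZMod ℓ)) (r : ℕ) (hr1 : 1 ≤ r) (hrk : r ≤ k) :
    Nat.card {p : InertRing ℓ k D × InertRing ℓ k D | pairCond ℓ k D r p.1 p.2} =
      ℓ ^ (3 * k - r - 2) * (ℓ - 1) * (r * ℓ - r + ℓ) := by
  classical
  haveI : NeZero (ℓ ^ k) := ⟨pow_ne_zero _ hℓ.ne_zero⟩
  rw [← count_main ℓ k hℓ hk D hD r hr1 hrk]
  have hmul := Phi_mul ℓ k D
  have hadd := Phi_add ℓ k D
  have halg := Phi_algebraMap ℓ k D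
  have halpha := Phi_alpha ℓ k D
  have hpow := Phi_natCast_pow ℓ k D r
  have hinj := Phi_injective ℓ k D hℓ hk
  have hsurj := Phi_surjective ℓ k D hℓ hk
  have hRHS : ∀ (u z : ZMod (ℓ ^ k)),
      algebraMap (ZMod (ℓ ^ k)) (InertRing ℓ k D) u + alphaI ℓ k D * (ℓ : InertRing ℓ k D) ^ r *
        algebraMap (ZMod (ℓ ^ k)) (InertRing ℓ k D) z
      = Phi ℓ k D (u, ((ℓ ^ r : ℕ) : ZMod (ℓ ^ k)) * z) := by
    intro u z
    rw [halg, halg, halpha, hpow, hmul, hmul, hadd]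
    congr 1
    simp only [Prod.mk.injEq]
    constructor
    · ring
    · ring
  have hmem : ∀ a1 a0 d0 : ZMod (ℓ ^ k), IsUnit (a0 * d0 - (D : ZMod (ℓ ^ k)) * a1 ^ 2) →
      ℓ ^ r ∣ (a1 * (d0 - a0)).val →
      pairCond ℓ k D r (Phi ℓ k D (a0, a1)) (Phi ℓ k D (d0, -a1)) := by
    intro a1 a0 d0 hU hdvd
    obtain ⟨z, hz⟩ := (dvd_val_iff (pow_dvd_pow ℓ hrk) _).2 hdvd
    unfold pairCond
    constructor
    · refine ⟨hU.unit, z, ?_⟩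
      rw [hRHS, hmul]
      congr 1
      simp only [Prod.mk.injEq]
      constructor
      · rw [IsUnit.unit_spec]
        ring
      · linear_combination hz
    · refine ⟨a0 + d0, ?_⟩
      rw [hadd, halg]
      congr 1
      simp only [Prod.mk.injEq]
      exact ⟨by trivial, by ring⟩
  refine Nat.card_congr (Equiv.ofBijective
    (fun t : {t : ZMod (ℓ ^ k) × ZMod (ℓ ^ k) × ZMod (ℓ ^ k) //
        IsUnit (t.2.1 * t.2.2 - (D : ZMod (ℓ ^ k)) * t.1 ^ 2) ∧
          ℓ ^ r ∣ (t.1 * (t.2.2 - t.2.1)).val} =>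
      (⟨(Phi ℓ k D (t.1.2.1, t.1.1), Phi ℓ k D (t.1.2.2, -t.1.1)),
        hmem t.1.1 t.1.2.1 t.1.2.2 t.2.1 t.2.2⟩ :
        {p : InertRing ℓ k D × InertRing ℓ k D | pairCond ℓ k D r p.1 p.2}))
    ⟨?_, ?_⟩).symm
  · intro t t' h
    have h' := Subtype.ext_iff.1 h
    have h1 := hinj (congrArg Prod.fst h')
    have h2 := hinj (congrArg Prod.snd h')
    have e1 := congrArg Prod.snd h1
    have e2 := congrArg Prod.fst h1
    have e3 := congrArg Prod.fst h2
    simp only at e1 e2 e3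
    apply Subtype.ext
    apply Prod.ext e1
    apply Prod.ext e2 e3
  · rintro ⟨⟨a, d⟩, hc⟩
    obtain ⟨x, rfl⟩ := hsurj a
    obtain ⟨y, rfl⟩ := hsurj d
    have hc' : pairCond ℓ k D r (Phi ℓ k D x) (Phi ℓ k D y) := hc
    unfold pairCond at hc'
    obtain ⟨⟨u, z, huz⟩, ⟨z0, hz0⟩⟩ := hc'
    rw [hRHS, hmul] at huz
    have hcomp := hinj huz
    have he1 := congrArg Prod.fst hcomp
    have he2 := congrArg Prod.snd hcomp
    rw [hadd, halg] at hz0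
    have hcomp0 := hinj hz0
    have hy2 : x.2 + y.2 = 0 := congrArg Prod.snd hcomp0
    have hy2' : y.2 = -x.2 := eq_neg_of_add_eq_zero_right hy2
    simp only at he1 he2
    refine ⟨⟨(x.2, x.1, y.1), ⟨?_, ?_⟩⟩, ?_⟩
    · have hval : x.1 * y.1 - (D : ZMod (ℓ ^ k)) * x.2 ^ 2 = (u : ZMod (ℓ ^ k)) := by
        rw [← he1, hy2']
        ring
      rw [hval]
      exact u.isUnit
    · refine (dvd_val_iff (pow_dvd_pow ℓ hrk) _).1 ⟨z, ?_⟩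
      rw [hy2'] at he2
      linear_combination he2
    · apply Subtype.ext
      show (Phi ℓ k D (x.1, x.2), Phi ℓ k D (y.1, -x.2)) = (Phi ℓ k D x, Phi ℓ k D y)
      rw [← hy2']

end StructAux
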